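/- Let f be a harmonic mapping on an open set Ω ⊆ ℂ, let z_0 ∈ Ω with J_f(z_0) ≠ 0, and put η_1 = f(z_0). Then there exist ε > 0 and δ > 0 such that for each η_2 ∈ ℂ with |η_2 − η_1| < ε there exists a unique z_* with |z_* − z_0| < δ and f(z_*) = η_2; moreover, z_* attracts z_0 under the harmonic Newton map H_{f−η_2}, i.e., the iterates H_{f−η_2}^k(z_0) converge to z_* as k → ∞. -/

import Mathlib

open Filter Metric Set Topology

noncomputable section

/-- The Wirtinger derivative ∂f = (1/2)(∂f/∂x − i ∂f/∂y). -/
def wDz (f : ℂ → ℂ) (z : ℂ) : ℂ :=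
  (fderiv ℝ f z 1 - Complex.I * fderiv ℝ f z Complex.I) / 2

/-- The Wirtinger derivative ∂̄f = (1/2)(∂f/∂x + i ∂f/∂y). -/
def wDzbar (f : ℂ → ℂ) (z : ℂ) : ℂ :=
  (fderiv ℝ f z 1 + Complex.I * fderiv ℝ f z Complex.I) / 2

/-- A harmonic mapping on an open set: locally `f = h + conj ∘ g` with `h`, `g` holomorphic. -/
def IsHarmonicMappingOn (f : ℂ → ℂ) (Ω : Set ℂ) : Prop :=
  ∀ z ∈ Ω, ∃ ε > 0, Metric.ball z ε ⊆ Ω ∧ ∃ h g : ℂ → ℂ,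
    DifferentiableOn ℂ h (Metric.ball z ε) ∧ DifferentiableOn ℂ g (Metric.ball z ε) ∧
    ∀ w ∈ Metric.ball z ε, f w = h w + (starRingEnd ℂ) (g w)

/-- The harmonic Newton map of `f − η`. -/
def newtonMap (f : ℂ → ℂ) (η : ℂ) (z : ℂ) : ℂ :=
  z - ((starRingEnd ℂ) (wDz f z) * (f z - η) - wDzbar f z * (starRingEnd ℂ) (f z - η)) /
      ((((‖wDz f z‖) ^ 2 - (‖wDzbar f z‖) ^ 2 : ℝ)) : ℂ)

/-- `zstar` attracts `s` under the harmonic Newton map of `f − η`. -/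
def NewtonAttracts (f : ℂ → ℂ) (η : ℂ) (s zstar : ℂ) : Prop :=
  Filter.Tendsto (fun k => (newtonMap f η)^[k] s) Filter.atTop (nhds zstar)

/-- Limit of the harmonic Newton iteration started at `s`. -/
def newtonLim (f : ℂ → ℂ) (η : ℂ) (s : ℂ) : ℂ :=
  limUnder Filter.atTop (fun k => (newtonMap f η)^[k] s)

/-- `S` is a (minimal) prediction set for the solution set `Z` of `f(z) = η`. -/
def IsPredSet (f : ℂ → ℂ) (η : ℂ) (S Z : Set ℂ) : Prop :=
  S.Finite ∧ Z.Finite ∧ S.ncard = Z.ncard ∧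
    ∀ z ∈ Z, ∃! s, s ∈ S ∧ NewtonAttracts f η s z


namespace LCaux

def Amap (a b : ℂ) : ℂ →L[ℝ] ℂ :=
  a • (ContinuousLinearMap.id ℝ ℂ) + b • (Complex.conjCLE : ℂ ≃L[ℝ] ℂ).toContinuousLinearMap

lemma Amap_apply (a b w : ℂ) : Amap a b w = a * w + b * (starRingEnd ℂ) w := by
  simp [Amap, smul_eq_mul]

lemma Amap_norm_sub_le (a b a' b' : ℂ) :
    ‖Amap a b - Amap a' b'‖ ≤ ‖a - a'‖ + ‖b - b'‖ := by
  refine ContinuousLinearMap.opNorm_le_bound _ (by positivity) fun w => ?_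
  have : (Amap a b - Amap a' b') w = (a - a') * w + (b - b') * (starRingEnd ℂ) w := by
    simp [Amap_apply]; ring
  rw [this]
  calc ‖(a - a') * w + (b - b') * (starRingEnd ℂ) w‖
      ≤ ‖(a - a') * w‖ + ‖(b - b') * (starRingEnd ℂ) w‖ := norm_add_le _ _
    _ = ‖a - a'‖ * ‖w‖ + ‖b - b'‖ * ‖w‖ := by
        simp [map_mul]
    _ = (‖a - a'‖ + ‖b - b'‖) * ‖w‖ := by ring

def Bfun (a b v : ℂ) : ℂ :=
  ((starRingEnd ℂ) a * v - b * (starRingEnd ℂ) v) /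
    (((‖a‖) ^ 2 - (‖b‖) ^ 2 : ℝ) : ℂ)

lemma Bfun_sub (a b x y : ℂ) : Bfun a b (x - y) = Bfun a b x - Bfun a b y := by
  simp only [Bfun, map_sub]
  rw [div_sub_div_same]; ring_nf

lemma Bfun_zero (a b : ℂ) : Bfun a b 0 = 0 := by simp [Bfun]

lemma cast_J (a b : ℂ) : (((‖a‖) ^ 2 - (‖b‖) ^ 2 : ℝ) : ℂ)
    = (Complex.normSq a : ℂ) - (Complex.normSq b : ℂ) := by
  push_cast [Complex.sq_norm]; ring

lemma Bfun_Amap (a b : ℂ) (hJ : (‖a‖) ^ 2 - (‖b‖) ^ 2 ≠ 0) (w : ℂ) :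
    Bfun a b (Amap a b w) = w := by
  have hJ' : (((‖a‖) ^ 2 - (‖b‖) ^ 2 : ℝ) : ℂ) ≠ 0 := by
    exact_mod_cast hJ
  rw [Bfun, Amap_apply, div_eq_iff hJ']
  have ha : (starRingEnd ℂ) a * a = (Complex.normSq a : ℂ) := by
    rw [mul_comm]; exact Complex.mul_conj a
  have hb : b * (starRingEnd ℂ) b = (Complex.normSq b : ℂ) := Complex.mul_conj b
  rw [cast_J]
  simp only [map_add, map_mul, Complex.conj_conj]
  linear_combination w * ha - w * hb

lemma Amap_Bfun (a b : ℂ) (hJ : (‖a‖) ^ 2 - (‖b‖) ^ 2 ≠ 0) (v : ℂ) :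
    Amap a b (Bfun a b v) = v := by
  have hJ' : (((‖a‖) ^ 2 - (‖b‖) ^ 2 : ℝ) : ℂ) ≠ 0 := by
    exact_mod_cast hJ
  rw [Amap_apply, Bfun]
  rw [map_div₀, Complex.conj_ofReal]
  rw [← mul_div_assoc, ← mul_div_assoc, ← add_div, div_eq_iff hJ']
  have ha : a * (starRingEnd ℂ) a = (Complex.normSq a : ℂ) := Complex.mul_conj a
  have hb : b * (starRingEnd ℂ) b = (Complex.normSq b : ℂ) := Complex.mul_conj b
  rw [cast_J]
  simp only [map_sub, map_mul, Complex.conj_conj]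
  linear_combination v * ha - v * hb

lemma Bfun_abs_le (a b v : ℂ) :
    ‖Bfun a b v‖ ≤
      (‖a‖ + ‖b‖) / |(‖a‖) ^ 2 - (‖b‖) ^ 2| *
        ‖v‖ := by
  rw [Bfun, norm_div, Complex.norm_real, Real.norm_eq_abs, div_mul_eq_mul_div]
  gcongr
  have h1 := norm_sub_le ((starRingEnd ℂ) a * v) (b * (starRingEnd ℂ) v)
  simp only [norm_mul, Complex.norm_conj] at h1
  nlinarith [norm_nonneg v]

lemma hasFDerivAt_decomp {h g f : ℂ → ℂ} {s : Set ℂ} (hs : IsOpen s)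
    (hh : DifferentiableOn ℂ h s) (hg : DifferentiableOn ℂ g s)
    (hfeq : ∀ w ∈ s, f w = h w + (starRingEnd ℂ) (g w)) {z : ℂ} (hz : z ∈ s) :
    HasFDerivAt f (Amap (deriv h z) ((starRingEnd ℂ) (deriv g z))) z := by
  have hha : HasDerivAt h (deriv h z) z := (hh.differentiableAt (hs.mem_nhds hz)).hasDerivAt
  have hga : HasDerivAt g (deriv g z) z := (hg.differentiableAt (hs.mem_nhds hz)).hasDerivAt
  have h1 := (hha.hasFDerivAt).restrictScalars ℝ
  have h2 := ((Complex.conjCLE : ℂ ≃L[ℝ] ℂ).toContinuousLinearMap.hasFDerivAt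
      (x := g z)).comp z ((hga.hasFDerivAt).restrictScalars ℝ)
  have h3 := h1.add h2
  have heq : (h + (Complex.conjCLE : ℂ ≃L[ℝ] ℂ).toContinuousLinearMap ∘ g)
      = fun w => h w + (starRingEnd ℂ) (g w) := by
    funext w; simp
  rw [heq] at h3
  have hD : (ContinuousLinearMap.toSpanSingleton ℂ (deriv h z)).restrictScalars ℝ +
      (Complex.conjCLE : ℂ ≃L[ℝ] ℂ).toContinuousLinearMap.comp
        ((ContinuousLinearMap.toSpanSingleton ℂ (deriv g z)).restrictScalars ℝ)
      = Amap (deriv h z) ((starRingEnd ℂ) (deriv g z)) := by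
    ext w
    simp [Amap_apply, smul_eq_mul]
    ring
  rw [hD] at h3
  refine h3.congr_of_eventuallyEq ?_
  filter_upwards [hs.mem_nhds hz] with w hw using (hfeq w hw)

lemma wDz_eq {h g f : ℂ → ℂ} {s : Set ℂ} (hs : IsOpen s)
    (hh : DifferentiableOn ℂ h s) (hg : DifferentiableOn ℂ g s)
    (hfeq : ∀ w ∈ s, f w = h w + (starRingEnd ℂ) (g w)) {z : ℂ} (hz : z ∈ s) :
    wDz f z = deriv h z ∧ wDzbar f z = (starRingEnd ℂ) (deriv g z) := by
  have hd := (hasFDerivAt_decomp hs hh hg hfeq hz).fderiv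
  rw [wDz, wDzbar, hd]
  simp only [Amap_apply, map_one, Complex.conj_I, mul_one]
  constructor
  · linear_combination (((starRingEnd ℂ) (deriv g z) - deriv h z) / 2) * Complex.I_sq
  · linear_combination ((-(starRingEnd ℂ) (deriv g z) + deriv h z) / 2) * Complex.I_sq

end LCaux

set_option maxHeartbeats 1000000 in
/-- Local continuation: if J_f(z₀) ≠ 0 and η₁ = f(z₀), then for every η₂ near η₁ there is a
unique solution z⋆ of f(z) = η₂ near z₀, and z⋆ attracts z₀ under the Newton map of f − η₂. -/
theorem local_continuation (Ω : Set ℂ) (hΩ : IsOpen Ω) (f : ℂ → ℂ)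
    (hf : IsHarmonicMappingOn f Ω) (z₀ : ℂ) (hz₀ : z₀ ∈ Ω)
    (hJ : (‖wDz f z₀‖) ^ 2 ≠ (‖wDzbar f z₀‖) ^ 2)
    (η₁ : ℂ) (hη₁ : η₁ = f z₀) :
    ∃ ε > 0, ∃ δ > 0, ∀ η₂ : ℂ, ‖η₂ - η₁‖ < ε →
      (∃! zstar : ℂ, ‖zstar - z₀‖ < δ ∧ f zstar = η₂) ∧
      ∀ zstar : ℂ, ‖zstar - z₀‖ < δ → f zstar = η₂ →
        NewtonAttracts f η₂ z₀ zstar := by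
  classical
  obtain ⟨ε₀, hε₀, hsub, h, g, hh, hg, hfeq⟩ := hf z₀ hz₀
  have hz₀b : z₀ ∈ ball z₀ ε₀ := mem_ball_self hε₀
  set a : ℂ → ℂ := deriv h with ha_def
  set b : ℂ → ℂ := fun z => (starRingEnd ℂ) (deriv g z) with hb_def
  have hW : ∀ z ∈ ball z₀ ε₀, wDz f z = a z ∧ wDzbar f z = b z := fun z hz =>
    LCaux.wDz_eq isOpen_ball hh hg hfeq hz
  have hDf : ∀ z ∈ ball z₀ ε₀, HasFDerivAt f (LCaux.Amap (a z) (b z)) z := fun z hz =>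
    LCaux.hasFDerivAt_decomp isOpen_ball hh hg hfeq hz
  -- Jacobian at z₀
  have hJ₀ : (‖a z₀‖) ^ 2 - (‖b z₀‖) ^ 2 ≠ 0 := by
    rw [← (hW z₀ hz₀b).1, ← (hW z₀ hz₀b).2]
    exact sub_ne_zero.mpr hJ
  set J₀ : ℝ := |(‖a z₀‖) ^ 2 - (‖b z₀‖) ^ 2| with hJ₀_def
  have hJ₀pos : 0 < J₀ := abs_pos.mpr hJ₀
  set C₀ : ℝ := ‖a z₀‖ + ‖b z₀‖ + 1 with hC₀_def
  have hC₀ : 0 < C₀ := by positivity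
  set M : ℝ := 2 * C₀ / J₀ with hM_def
  have hM : 0 < M := by positivity
  set c : ℝ := min (1 / (8 * M)) (min (1 / 2) (J₀ / (4 * C₀))) with hc_def
  have hc : 0 < c := by
    apply lt_min (by positivity) (lt_min (by norm_num) (by positivity))
  have hc1 : c ≤ 1 / (8 * M) := min_le_left _ _
  have hc2 : c ≤ 1 / 2 := le_trans (min_le_right _ _) (min_le_left _ _)
  have hc3 : c ≤ J₀ / (4 * C₀) := le_trans (min_le_right _ _) (min_le_right _ _)
  -- continuity of a, b at z₀
  have hca : ContinuousAt a z₀ :=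
    (((hh.analyticOnNhd isOpen_ball).deriv) z₀ hz₀b).continuousAt
  have hcb : ContinuousAt b z₀ := by
    exact Complex.continuous_conj.continuousAt.comp
      (((hg.analyticOnNhd isOpen_ball).deriv) z₀ hz₀b).continuousAt
  -- choose a radius r
  have hev : ∀ᶠ u in 𝓝 z₀, ‖a u - a z₀‖ < c ∧ ‖b u - b z₀‖ < c
      ∧ u ∈ ball z₀ ε₀ := by
    have h1 : ∀ᶠ u in 𝓝 z₀, dist (a u) (a z₀) < c := hca (Metric.ball_mem_nhds _ hc)
    have h2 : ∀ᶠ u in 𝓝 z₀, dist (b u) (b z₀) < c := hcb (Metric.ball_mem_nhds _ hc)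
    filter_upwards [h1, h2, isOpen_ball.mem_nhds hz₀b] with u hu1 hu2 hu3
    rw [Complex.dist_eq] at hu1 hu2
    exact ⟨hu1, hu2, hu3⟩
  obtain ⟨r', hr', hball⟩ := Metric.eventually_nhds_iff_ball.mp hev
  set r : ℝ := r' / 2 with hr_def
  have hrpos : 0 < r := by positivity
  set T : Set ℂ := closedBall z₀ r with hT_def
  have hz₀T : z₀ ∈ T := mem_closedBall_self hrpos.le
  have hTprop : ∀ u ∈ T, ‖a u - a z₀‖ ≤ c ∧ ‖b u - b z₀‖ ≤ c
      ∧ u ∈ ball z₀ ε₀ := by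
    intro u hu
    have : u ∈ ball z₀ r' := closedBall_subset_ball (by linarith) hu
    obtain ⟨h1, h2, h3⟩ := hball u this
    exact ⟨h1.le, h2.le, h3⟩
  have hTsub : T ⊆ ball z₀ ε₀ := fun u hu => (hTprop u hu).2.2
  -- quantitative bounds on T
  have habsb : ∀ u ∈ T, ‖a u‖ + ‖b u‖ ≤ C₀ := by
    intro u hu
    obtain ⟨h1, h2, -⟩ := hTprop u hu
    have ha' : ‖a u‖ - ‖a z₀‖ ≤ ‖a u - a z₀‖ := by
      simpa using norm_sub_norm_le (a u) (a z₀)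
    have hb' : ‖b u‖ - ‖b z₀‖ ≤ ‖b u - b z₀‖ := by
      simpa using norm_sub_norm_le (b u) (b z₀)
    linarith
  have hJu : ∀ u ∈ T, J₀ / 2 ≤ |(‖a u‖) ^ 2 - (‖b u‖) ^ 2| := by
    intro u hu
    obtain ⟨h1, h2, -⟩ := hTprop u hu
    have ha' : |‖a u‖ - ‖a z₀‖| ≤ c := by
      refine le_trans ?_ h1
      simpa using abs_norm_sub_norm_le (a u) (a z₀)
    have hb' : |‖b u‖ - ‖b z₀‖| ≤ c := by
      refine le_trans ?_ h2
      simpa using abs_norm_sub_norm_le (b u) (b z₀)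
    have hA0 := norm_nonneg (a z₀)
    have hB0 := norm_nonneg (b z₀)
    have b1 : |(‖a u‖) ^ 2 - (‖a z₀‖) ^ 2|
        ≤ c * (2 * ‖a z₀‖ + c) := by
      have e : (‖a u‖) ^ 2 - (‖a z₀‖) ^ 2
          = (‖a u‖ - ‖a z₀‖)
            * (‖a u‖ + ‖a z₀‖) := by ring
      rw [e, abs_mul]
      have h3 : |‖a u‖ + ‖a z₀‖| ≤ 2 * ‖a z₀‖ + c := by
        have hnn : (0:ℝ) ≤ ‖a u‖ + ‖a z₀‖ := by positivity
        rw [_root_.abs_of_nonneg hnn]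
        have := (abs_le.mp ha').2
        linarith
      exact mul_le_mul ha' h3 (abs_nonneg _) hc.le
    have b2 : |(‖b u‖) ^ 2 - (‖b z₀‖) ^ 2|
        ≤ c * (2 * ‖b z₀‖ + c) := by
      have e : (‖b u‖) ^ 2 - (‖b z₀‖) ^ 2
          = (‖b u‖ - ‖b z₀‖)
            * (‖b u‖ + ‖b z₀‖) := by ring
      rw [e, abs_mul]
      have h3 : |‖b u‖ + ‖b z₀‖| ≤ 2 * ‖b z₀‖ + c := by
        have hnn : (0:ℝ) ≤ ‖b u‖ + ‖b z₀‖ := by positivity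
        rw [_root_.abs_of_nonneg hnn]
        have := (abs_le.mp hb').2
        linarith
      exact mul_le_mul hb' h3 (abs_nonneg _) hc.le
    have hcC : c * (4 * C₀) ≤ J₀ := (le_div_iff₀ (by positivity)).mp hc3
    have hdiff : |((‖a u‖) ^ 2 - (‖b u‖) ^ 2) -
        ((‖a z₀‖) ^ 2 - (‖b z₀‖) ^ 2)| ≤ J₀ / 2 := by
      have e : ((‖a u‖) ^ 2 - (‖b u‖) ^ 2) -
          ((‖a z₀‖) ^ 2 - (‖b z₀‖) ^ 2)
          = ((‖a u‖) ^ 2 - (‖a z₀‖) ^ 2) -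
            ((‖b u‖) ^ 2 - (‖b z₀‖) ^ 2) := by ring
      rw [e]
      refine (abs_sub _ _).trans ?_
      nlinarith [mul_le_mul_of_nonneg_left hc2 hc.le]
    have htri := abs_sub_abs_le_abs_sub ((‖a z₀‖) ^ 2 - (‖b z₀‖) ^ 2)
      ((‖a u‖) ^ 2 - (‖b u‖) ^ 2)
    rw [abs_sub_comm] at hdiff
    linarith [htri.trans hdiff]
  have hJune : ∀ u ∈ T, (‖a u‖) ^ 2 - (‖b u‖) ^ 2 ≠ 0 := by
    intro u hu
    have := hJu u hu
    intro hzero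
    rw [hzero] at this
    simp at this
    linarith
  -- bound for Bfun on T
  have hBb : ∀ u ∈ T, ∀ v : ℂ, ‖LCaux.Bfun (a u) (b u) v‖ ≤ M * ‖v‖ := by
    intro u hu v
    refine (LCaux.Bfun_abs_le (a u) (b u) v).trans ?_
    have h1 := habsb u hu
    have h2 := hJu u hu
    have hv := norm_nonneg v
    have : (‖a u‖ + ‖b u‖) /
        |(‖a u‖) ^ 2 - (‖b u‖) ^ 2| ≤ C₀ / (J₀ / 2) := by
      have h20 : 0 < J₀ / 2 := by linarith
      exact div_le_div₀ hC₀.le h1 h20 h2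
    have heq : C₀ / (J₀ / 2) = M := by
      rw [hM_def]; rw [div_div_eq_mul_div]; ring_nf
    calc _ ≤ C₀ / (J₀ / 2) * ‖v‖ := by
          apply mul_le_mul_of_nonneg_right this hv
      _ = M * ‖v‖ := by rw [heq]
  -- Amap distance bound on T
  have hAb : ∀ u ∈ T, ‖LCaux.Amap (a u) (b u) - LCaux.Amap (a z₀) (b z₀)‖ ≤ 1 / (4 * M) := by
    intro u hu
    obtain ⟨h1, h2, -⟩ := hTprop u hu
    refine (LCaux.Amap_norm_sub_le _ _ _ _).trans ?_
    have : 1 / (8 * M) + 1 / (8 * M) = 1 / (4 * M) := by field_simp; ring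
    linarith
  -- mean value estimate on T (with base point w)
  have hMVT : ∀ w ∈ T, ∀ p ∈ T, ∀ q ∈ T,
      ‖f q - f p - LCaux.Amap (a w) (b w) (q - p)‖
        ≤ 1 / (2 * M) * ‖q - p‖ := by
    intro w hw p hp q hq
    have key := Convex.norm_image_sub_le_of_norm_hasFDerivWithin_le'
      (f := f) (f' := fun u => LCaux.Amap (a u) (b u)) (φ := LCaux.Amap (a w) (b w))
      (C := 1 / (2 * M)) (s := T)
      (fun x hx => (hDf x (hTsub hx)).hasFDerivWithinAt)
      (fun x hx => by
        have h1 := hAb x hx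
        have h2 := hAb w hw
        have h3 := norm_sub_le (LCaux.Amap (a x) (b x) - LCaux.Amap (a z₀) (b z₀))
          (LCaux.Amap (a w) (b w) - LCaux.Amap (a z₀) (b z₀))
        rw [sub_sub_sub_cancel_right] at h3
        have : 1 / (4 * M) + 1 / (4 * M) = 1 / (2 * M) := by field_simp; ring
        linarith)
      (convex_closedBall _ _) hp hq
    simpa using key
  -- Newton contraction towards a solution
  have hNkey : ∀ η₂ : ℂ, ∀ p ∈ T, ∀ q ∈ T, f q = η₂ →
      ‖newtonMap f η₂ p - q‖ ≤ 1 / 2 * ‖p - q‖ := by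
    intro η₂ p hp q hq hfq
    have hpball := hTsub hp
    have hJp := hJune p hp
    have hNd : newtonMap f η₂ p = p - LCaux.Bfun (a p) (b p) (f p - η₂) := by
      rw [newtonMap, (hW p hpball).1, (hW p hpball).2]; rfl
    have heq : newtonMap f η₂ p - q
        = LCaux.Bfun (a p) (b p) (LCaux.Amap (a p) (b p) (p - q) - (f p - f q)) := by
      have e1 : LCaux.Bfun (a p) (b p) (LCaux.Amap (a p) (b p) (p - q) - (f p - f q))
          = (p - q) - LCaux.Bfun (a p) (b p) (f p - f q) := by
        rw [LCaux.Bfun_sub, LCaux.Bfun_Amap _ _ hJp]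
      rw [hNd, e1, hfq]
      ring
    have harg : LCaux.Amap (a p) (b p) (p - q) - (f p - f q)
        = f q - f p - LCaux.Amap (a p) (b p) (q - p) := by
      have : (p - q : ℂ) = -(q - p) := by ring
      rw [this, map_neg]; ring
    rw [heq, harg]
    calc ‖LCaux.Bfun (a p) (b p) (f q - f p - LCaux.Amap (a p) (b p) (q - p))‖
        ≤ M * ‖f q - f p - LCaux.Amap (a p) (b p) (q - p)‖ := hBb p hp _
      _ ≤ M * (1 / (2 * M) * ‖q - p‖) := by
          apply mul_le_mul_of_nonneg_left (hMVT p hp p hp q hq) hM.le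
      _ = 1 / 2 * ‖p - q‖ := by
          rw [norm_sub_rev q p]
          field_simp [hM.ne']
  -- parameters
  set δ : ℝ := r / 2 with hδ_def
  have hδ : 0 < δ := by positivity
  set ε : ℝ := δ / (4 * M) with hε_def
  have hε : 0 < ε := by positivity
  have hδr : δ ≤ r := by linarith
  have hδT : closedBall z₀ δ ⊆ T := closedBall_subset_closedBall hδr
  refine ⟨ε, hε, δ, hδ, ?_⟩
  intro η₂ hη₂
  -- the modified Newton map Ψ
  set Ψ : ℂ → ℂ := fun p => p - LCaux.Bfun (a z₀) (b z₀) (f p - η₂) with hΨ_def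
  have hΨcontr : ∀ p ∈ T, ∀ q ∈ T, ‖Ψ p - Ψ q‖ ≤ 1 / 2 * ‖p - q‖ := by
    intro p hp q hq
    have heq : Ψ p - Ψ q
        = LCaux.Bfun (a z₀) (b z₀) (LCaux.Amap (a z₀) (b z₀) (p - q) - (f p - f q)) := by
      have e1 : LCaux.Bfun (a z₀) (b z₀) (LCaux.Amap (a z₀) (b z₀) (p - q) - (f p - f q))
          = (p - q) - LCaux.Bfun (a z₀) (b z₀) (f p - f q) := by
        rw [LCaux.Bfun_sub, LCaux.Bfun_Amap _ _ hJ₀]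
      have e2 : LCaux.Bfun (a z₀) (b z₀) (f p - f q)
          = LCaux.Bfun (a z₀) (b z₀) (f p - η₂) - LCaux.Bfun (a z₀) (b z₀) (f q - η₂) := by
        rw [show (f p - f q : ℂ) = (f p - η₂) - (f q - η₂) by ring, LCaux.Bfun_sub]
      rw [e1, e2]
      simp only [hΨ_def]
      ring
    have harg : LCaux.Amap (a z₀) (b z₀) (p - q) - (f p - f q)
        = f q - f p - LCaux.Amap (a z₀) (b z₀) (q - p) := by
      have : (p - q : ℂ) = -(q - p) := by ring
      rw [this, map_neg]; ring
    rw [heq, harg]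
    calc ‖LCaux.Bfun (a z₀) (b z₀) (f q - f p - LCaux.Amap (a z₀) (b z₀) (q - p))‖
        ≤ M * ‖f q - f p - LCaux.Amap (a z₀) (b z₀) (q - p)‖ := hBb z₀ hz₀T _
      _ ≤ M * (1 / (2 * M) * ‖q - p‖) := by
          apply mul_le_mul_of_nonneg_left (hMVT z₀ hz₀T p hp q hq) hM.le
      _ = 1 / 2 * ‖p - q‖ := by
          rw [norm_sub_rev q p]
          field_simp [hM.ne']
  have hfix_iff : ∀ p : ℂ, f p = η₂ → Ψ p = p := by
    intro p hp
    rw [hΨ_def]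
    simp only [hp, sub_self, LCaux.Bfun_zero, sub_zero]
  have hΨz₀ : ‖Ψ z₀ - z₀‖ ≤ δ / 4 := by
    have : Ψ z₀ - z₀ = -LCaux.Bfun (a z₀) (b z₀) (f z₀ - η₂) := by rw [hΨ_def]; ring
    rw [this, norm_neg]
    calc ‖LCaux.Bfun (a z₀) (b z₀) (f z₀ - η₂)‖
        ≤ M * ‖f z₀ - η₂‖ := hBb z₀ hz₀T _
      _ ≤ M * ε := by
          apply mul_le_mul_of_nonneg_left ?_ hM.le
          rw [← hη₁, norm_sub_rev (η₁) η₂]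
          exact hη₂.le
      _ = δ / 4 := by rw [hε_def]; field_simp [hM.ne']
  -- uniqueness of solutions in the δ-ball
  have huniq : ∀ y y' : ℂ, ‖y - z₀‖ < δ → f y = η₂ →
      ‖y' - z₀‖ < δ → f y' = η₂ → y = y' := by
    intro y y' hy hfy hy' hfy'
    have hyT : y ∈ T := by
      rw [hT_def, mem_closedBall, Complex.dist_eq]; linarith
    have hy'T : y' ∈ T := by
      rw [hT_def, mem_closedBall, Complex.dist_eq]; linarith
    have hcon := hΨcontr y hyT y' hy'T
    rw [hfix_iff y hfy, hfix_iff y' hfy'] at hcon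
    have habs := norm_nonneg (y - y')
    have h0 : ‖y - y'‖ = 0 := by linarith
    exact sub_eq_zero.mp (norm_eq_zero.mp h0)
  -- Ψ maps the closed δ-ball into itself
  have hmaps : MapsTo Ψ (closedBall z₀ δ) (closedBall z₀ δ) := by
    intro p hp
    have hpT : p ∈ T := hδT hp
    have h1 := hΨcontr p hpT z₀ hz₀T
    have h2 := hΨz₀
    rw [mem_closedBall, Complex.dist_eq] at hp ⊢
    have h3 : ‖Ψ p - z₀‖ ≤ ‖Ψ p - Ψ z₀‖ + ‖Ψ z₀ - z₀‖ := by
      rw [show (Ψ p - z₀ : ℂ) = (Ψ p - Ψ z₀) + (Ψ z₀ - z₀) by ring]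
      exact norm_add_le _ _
    linarith
  have hsc : IsComplete (closedBall z₀ δ) := isClosed_closedBall.isComplete
  have hz₀δ : z₀ ∈ closedBall z₀ δ := mem_closedBall_self hδ.le
  have hcontr : ContractingWith (1/2 : NNReal) (hmaps.restrict Ψ _ _) := by
    constructor
    · have hlt : ((1/2 : NNReal) : ℝ) < 1 := by norm_num
      exact_mod_cast hlt
    · apply LipschitzWith.of_dist_le_mul
      rintro ⟨x, hx⟩ ⟨y, hy⟩
      have hxy := hΨcontr x (hδT hx) y (hδT hy)
      have hd1 : dist (hmaps.restrict Ψ _ _ ⟨x, hx⟩) (hmaps.restrict Ψ _ _ ⟨y, hy⟩)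
          = dist (Ψ x) (Ψ y) := rfl
      have hd2 : dist (⟨x, hx⟩ : closedBall z₀ δ) (⟨y, hy⟩ : closedBall z₀ δ)
          = dist x y := rfl
      rw [hd1, hd2, Complex.dist_eq, Complex.dist_eq]
      have hcast : (((1:NNReal)/2 : NNReal) : ℝ) = 1/2 := by norm_num
      rw [hcast]
      exact hxy
  set zs : ℂ := ContractingWith.efixedPoint' Ψ hsc hmaps hcontr z₀ hz₀δ (edist_ne_top _ _)
    with hzs_def
  have hzs_mem : zs ∈ closedBall z₀ δ :=
    ContractingWith.efixedPoint_mem' hsc hmaps hcontr hz₀δ (edist_ne_top _ _)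
  have hzs_fix : Ψ zs = zs :=
    ContractingWith.efixedPoint_isFixedPt' hsc hmaps hcontr hz₀δ (edist_ne_top _ _)
  have hzs_fix' : zs - LCaux.Bfun (a z₀) (b z₀) (f zs - η₂) = zs := by
    have := hzs_fix
    rw [hΨ_def] at this
    simpa using this
  have hzs_sol : f zs = η₂ := by
    have h0 : LCaux.Bfun (a z₀) (b z₀) (f zs - η₂) = 0 := sub_eq_self.mp hzs_fix'
    have h1 := LCaux.Amap_Bfun (a z₀) (b z₀) hJ₀ (f zs - η₂)
    rw [h0, map_zero] at h1
    exact sub_eq_zero.mp h1.symm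
  have hzs_close : ‖zs - z₀‖ ≤ δ / 2 := by
    have h1 := hΨcontr zs (hδT hzs_mem) z₀ hz₀T
    have h2 := hΨz₀
    have h3 : ‖zs - z₀‖ ≤ ‖Ψ zs - Ψ z₀‖ + ‖Ψ z₀ - z₀‖ := by
      rw [show (zs - z₀ : ℂ) = (Ψ zs - Ψ z₀) + (Ψ z₀ - z₀) by rw [hzs_fix]; ring]
      exact norm_add_le _ _
    linarith
  have hzs_lt : ‖zs - z₀‖ < δ := lt_of_le_of_lt hzs_close (by linarith)
  constructor
  · exact ⟨zs, ⟨hzs_lt, hzs_sol⟩, fun y hy => huniq y zs hy.1 hy.2 hzs_lt hzs_sol⟩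
  · intro zstar hzstar hfz
    have hzstarT : zstar ∈ T := by
      rw [hT_def, mem_closedBall, Complex.dist_eq]
      linarith
    have habs0 : ‖z₀ - zstar‖ < δ := by
      rw [norm_sub_rev z₀ zstar]
      exact hzstar
    have hiter : ∀ k : ℕ, ‖(newtonMap f η₂)^[k] z₀ - zstar‖
        ≤ (1/2 : ℝ)^k * ‖z₀ - zstar‖ ∧ (newtonMap f η₂)^[k] z₀ ∈ T := by
      intro k
      induction k with
      | zero => exact ⟨by simp, hz₀T⟩
      | succ k ih =>
        obtain ⟨ih1, ih2⟩ := ih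
        have hk := hNkey η₂ _ ih2 zstar hzstarT hfz
        have hpow1 : ((1:ℝ)/2)^k ≤ 1 := pow_le_one₀ (by norm_num) (by norm_num)
        have habs_nn := norm_nonneg (z₀ - zstar)
        rw [Function.iterate_succ_apply']
        have hstep : ‖newtonMap f η₂ ((newtonMap f η₂)^[k] z₀) - zstar‖
            ≤ (1/2 : ℝ)^(k+1) * ‖z₀ - zstar‖ := by
          calc ‖newtonMap f η₂ ((newtonMap f η₂)^[k] z₀) - zstar‖
              ≤ 1/2 * ‖(newtonMap f η₂)^[k] z₀ - zstar‖ := hk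
            _ ≤ 1/2 * ((1/2 : ℝ)^k * ‖z₀ - zstar‖) := by linarith
            _ = (1/2 : ℝ)^(k+1) * ‖z₀ - zstar‖ := by ring
        refine ⟨hstep, ?_⟩
        rw [hT_def, mem_closedBall, Complex.dist_eq]
        have htri : ‖newtonMap f η₂ ((newtonMap f η₂)^[k] z₀) - z₀‖
            ≤ ‖newtonMap f η₂ ((newtonMap f η₂)^[k] z₀) - zstar‖
              + ‖zstar - z₀‖ := by
          rw [show (newtonMap f η₂ ((newtonMap f η₂)^[k] z₀) - z₀ : ℂ)
            = (newtonMap f η₂ ((newtonMap f η₂)^[k] z₀) - zstar) + (zstar - z₀) by ring]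
          exact norm_add_le _ _
        have hle1 : (1/2 : ℝ)^(k+1) * ‖z₀ - zstar‖ ≤ ‖z₀ - zstar‖ := by
          have : ((1:ℝ)/2)^(k+1) ≤ 1 := pow_le_one₀ (by norm_num) (by norm_num)
          nlinarith
        have hδr2 : 2 * δ = r := by rw [hδ_def]; ring
        linarith
    show Filter.Tendsto (fun k => (newtonMap f η₂)^[k] z₀) Filter.atTop (nhds zstar)
    rw [tendsto_iff_dist_tendsto_zero]
    have h0 : Filter.Tendsto (fun k : ℕ => (1/2 : ℝ)^k * ‖z₀ - zstar‖)
        atTop (nhds 0) := by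
      have h1 : Filter.Tendsto (fun k : ℕ => (1/2 : ℝ)^k) atTop (nhds 0) :=
        tendsto_pow_atTop_nhds_zero_of_lt_one (by norm_num) (by norm_num)
      simpa using h1.mul_const (‖z₀ - zstar‖)
    exact squeeze_zero (fun k => dist_nonneg)
      (fun k => by rw [Complex.dist_eq]; exact (hiter k).1) h0
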